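/- Let S, I, R, B : [0,∞) → ℝ be a solution of the SIRB system S' = −βSI, I' = βSI − γI + βσαIR, R' = γI − βσIR, B' = βσ(1−α)IR with β>0, γ>0, σ>1, 0<α<1, initial conditions S(0)>0, I(0)>0, R(0)≥0, B(0)≥0 with (σβ/γ)·R(0) < 1, S(0)+I(0)+R(0)+B(0)=1, and suppose S(t)>0 and I(t)>0 for all t≥0. Define r(S) := (γ/(σβ))·(1 − (1 − (σβ/γ)·R(0))·(S/S(0))^σ), R̂(S) := (β/γ)·(S + ασ·r(S)), p(S) := (S(0) − S) + (γ/β)·ln(S/S(0)), and q(R) := (γ/(σβ))·ln((1 − (σβ/γ)R)/(1 − (σβ/γ)R(0))) + (R − R(0)). Assume ℛ₀ := R̂(S(0)) ≤ 1, (β/γ)·(S(0) + ασ²R(0)) < ασ, and R̂(S̃) > 1 where S̃ := ((β/γ)·S(0)/(σα·(1 − (σβ/γ)·R(0))))^(1/(σ−1)) · S(0); let Ŝ₂ be the larger of the two roots of R̂(S) = 1 in (0, S(0)). If I(0) + p(Ŝ₂) − α·q(r(Ŝ₂)) ≤ 0, then I is monotonically decreasing on [0,∞), and I(t) → 0 as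 t → ∞. -/

import Mathlib

open Set

lemma sirb_aux_zero (f K : ℝ → ℝ) (h0 : f 0 = 0)
    (hf : ∀ t : ℝ, 0 ≤ t → HasDerivAt f (K t * f t) t)
    (hK : ∀ t : ℝ, 0 ≤ t → ContinuousAt K t) :
    ∀ t : ℝ, 0 ≤ t → f t = 0 := by
  intro b hb
  have hKc : ContinuousOn K (Icc 0 b) := fun x hx => (hK x hx.1).continuousWithinAt
  obtain ⟨C, hC⟩ := (isCompact_Icc (a := (0:ℝ)) (b := b)).exists_bound_of_continuousOn hKc
  have hfc : ContinuousOn f (Icc 0 b) := fun x hx => (hf x hx.1).continuousAt.continuousWithinAt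
  have key := norm_le_gronwallBound_of_norm_deriv_right_le (f := f)
    (f' := fun x => K x * f x) (δ := 0) (K := max C 0) (ε := 0) (a := 0) (b := b) hfc
    (fun x hx => (hf x hx.1).hasDerivWithinAt)
    (by simp [h0])
    (fun x hx => by
      have h1 := hC x ⟨hx.1, hx.2.le⟩
      have h2 : |K x| ≤ max C 0 := le_trans (by simpa using h1) (le_max_left _ _)
      have h3 : ‖K x * f x‖ = |K x| * ‖f x‖ := by simp [abs_mul]
      rw [h3, add_zero]
      exact mul_le_mul_of_nonneg_right h2 (norm_nonneg _))
  have hb2 := key b ⟨hb, le_rfl⟩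
  rw [gronwallBound_ε0_δ0] at hb2
  simpa using norm_le_zero_iff.mp hb2

lemma sirb_aux_const (f : ℝ → ℝ) (hf : ∀ t : ℝ, 0 ≤ t → HasDerivAt f 0 t) :
    ∀ t : ℝ, 0 ≤ t → f t = f 0 := by
  intro b hb
  exact constant_of_has_deriv_right_zero
    (fun x hx => (hf x hx.1).continuousAt.continuousWithinAt)
    (fun x hx => (hf x hx.1).hasDerivWithinAt) b ⟨hb, le_rfl⟩

set_option maxHeartbeats 2000000 in

/-- Delayed-epidemic criterion, non-epidemic case: under `σ > 1`,
`ℛ₀ ≤ 1`, `(β/γ)(S(0) + ασ²R(0)) < ασ` and `R̂(S̃) > 1`, if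
`I(0) + p(Ŝ₂) − α q(r(Ŝ₂)) ≤ 0` (with `Ŝ₂` the larger root of `R̂ = 1` in `(0,S(0))`),
then `I` is monotonically decreasing on `[0,∞)` and `I(t) → 0`. -/
theorem sirb_delayed_epidemic_fails (β γ σ α : ℝ) (S I R B : ℝ → ℝ)
    (hβ : 0 < β) (hγ : 0 < γ) (hσ : 1 < σ) (hα0 : 0 < α) (hα1 : α < 1)
    (hS' : ∀ t : ℝ, 0 ≤ t → HasDerivAt S (-(β * S t * I t)) t)
    (hI' : ∀ t : ℝ, 0 ≤ t → HasDerivAt I (β * S t * I t - γ * I t + β * σ * α * I t * R t) t)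
    (hR' : ∀ t : ℝ, 0 ≤ t → HasDerivAt R (γ * I t - β * σ * I t * R t) t)
    (hB' : ∀ t : ℝ, 0 ≤ t → HasDerivAt B (β * σ * (1 - α) * I t * R t) t)
    (hS0 : 0 < S 0) (hI0 : 0 < I 0) (hR0 : 0 ≤ R 0) (hB0 : 0 ≤ B 0)
    (hsum : S 0 + I 0 + R 0 + B 0 = 1)
    (hSpos : ∀ t : ℝ, 0 ≤ t → 0 < S t) (hIpos : ∀ t : ℝ, 0 ≤ t → 0 < I t)
    (hR0lt1 : σ * β / γ * R 0 < 1)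
    (r Rhat : ℝ → ℝ)
    (hr : ∀ x : ℝ, r x = γ / (σ * β) * (1 - (1 - σ * β / γ * R 0) * (x / S 0) ^ σ))
    (hRhat : ∀ x : ℝ, Rhat x = β / γ * (x + α * σ * r x))
    (p q : ℝ → ℝ)
    (hp : ∀ x : ℝ, p x = (S 0 - x) + γ / β * Real.log (x / S 0))
    (hq : ∀ x : ℝ,
      q x = γ / (σ * β) * Real.log ((1 - σ * β / γ * x) / (1 - σ * β / γ * R 0)) + (x - R 0))
    (hR0le : Rhat (S 0) ≤ 1)
    (hcase : β / γ * (S 0 + α * σ ^ 2 * R 0) < α * σ)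
    (Stilde : ℝ)
    (hSt : Stilde = (β / γ * S 0 / (σ * α * (1 - σ * β / γ * R 0))) ^ (1 / (σ - 1)) * S 0)
    (hRt : 1 < Rhat Stilde)
    (Shat2 : ℝ) (hS2a : Stilde < Shat2) (hS2b : Shat2 < S 0) (hS2root : Rhat Shat2 = 1)
    (hmin : I 0 + p Shat2 - α * q (r Shat2) ≤ 0) :
    StrictAntiOn I (Set.Ici 0) ∧ Filter.Tendsto I Filter.atTop (nhds 0) := by
  have hσ0 : (0:ℝ) < σ := lt_trans one_pos hσ
  have hσβ : (0:ℝ) < σ * β := mul_pos hσ0 hβ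
  set c : ℝ := 1 - σ * β / γ * R 0 with hc_def
  have hc : 0 < c := sub_pos.2 hR0lt1
  -- derivative of r ∘ S
  have hrS : ∀ t : ℝ, 0 ≤ t →
      HasDerivAt (fun u => r (S u)) (γ * I t - β * σ * I t * r (S t)) t := by
    intro t ht
    have hx : 0 < S t / S 0 := div_pos (hSpos t ht) hS0
    have h1 : HasDerivAt (fun u => S u / S 0) (-(β * S t * I t) / S 0) t :=
      (hS' t ht).div_const _
    have h2 : HasDerivAt (fun u => (S u / S 0) ^ σ)
        (-(β * S t * I t) / S 0 * σ * (S t / S 0) ^ (σ - 1)) t :=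
      h1.rpow_const (Or.inr hσ.le)
    have h3 : HasDerivAt (fun u => γ / (σ * β) * (1 - c * (S u / S 0) ^ σ))
        (γ / (σ * β) * (-(c * (-(β * S t * I t) / S 0 * σ * (S t / S 0) ^ (σ - 1))))) t :=
      ((h2.const_mul c).const_sub 1).const_mul _
    have heq : (fun u => r (S u)) = fun u => γ / (σ * β) * (1 - c * (S u / S 0) ^ σ) :=
      funext fun u => hr (S u)
    rw [heq, hr (S t)]
    convert h3 using 1
    have hpow : (S t / S 0) ^ (σ - 1) * (S t / S 0) = (S t / S 0) ^ σ := by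
      rw [← Real.rpow_add_one (ne_of_gt hx)]
      ring_nf
    have hSne : S 0 ≠ 0 := ne_of_gt hS0
    have hpow2 : (S t / S 0) ^ (σ - 1) * S t = (S t / S 0) ^ σ * S 0 := by
      rw [← hpow]; field_simp
    clear_value c
    field_simp
    linear_combination (-(I t * c)) * hpow2
  -- Step A : R t = r (S t)
  have hRr : ∀ t : ℝ, 0 ≤ t → R t = r (S t) := by
    have h0 : R 0 - r (S 0) = 0 := by
      rw [hr (S 0), div_self (ne_of_gt hS0), Real.one_rpow, hc_def]
      field_simp
      ring
    have key := sirb_aux_zero (fun t => R t - r (S t)) (fun t => -(β * σ * I t)) h0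
      (fun t ht => by
        have h := (hR' t ht).sub (hrS t ht)
        refine h.congr_deriv ?_
        ring)
      (fun t ht => (((hI' t ht).continuousAt.const_mul (β * σ)).neg))
    intro t ht
    have := key t ht
    linarith [this]
  -- positivity of 1 - σβ/γ R t
  have h1R : ∀ t : ℝ, 0 ≤ t → 0 < 1 - σ * β / γ * R t := by
    intro t ht
    rw [hRr t ht, hr (S t)]
    have hx : 0 < S t / S 0 := div_pos (hSpos t ht) hS0
    have hXσ : 0 < (S t / S 0) ^ σ := Real.rpow_pos_of_pos hx σ
    have he : σ * β / γ * (γ / (σ * β) * (1 - c * (S t / S 0) ^ σ))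
        = 1 - c * (S t / S 0) ^ σ := by field_simp
    rw [he]
    have := mul_pos hc hXσ
    linarith
  -- Step B : conservation law
  have hIeq : ∀ t : ℝ, 0 ≤ t → I t = I 0 + p (S t) - α * q (R t) := by
    have hG : ∀ t : ℝ, 0 ≤ t →
        HasDerivAt (fun u => I u - (I 0 + p (S u) - α * q (R u))) 0 t := by
      intro t ht
      have hSt0 : (0:ℝ) < S t := hSpos t ht
      have hxne : S t / S 0 ≠ 0 := ne_of_gt (div_pos hSt0 hS0)
      have hpS : HasDerivAt (fun u => p (S u)) (β * S t * I t - γ * I t) t := by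
        have h1 : HasDerivAt (fun u => (S 0 - S u) + γ / β * Real.log (S u / S 0))
            (-(-(β * S t * I t)) + γ / β * ((-(β * S t * I t) / S 0) / (S t / S 0))) t :=
          ((hS' t ht).const_sub (S 0)).add
            ((((hS' t ht).div_const (S 0)).log hxne).const_mul (γ / β))
        have heq : (fun u => p (S u)) = fun u => (S 0 - S u) + γ / β * Real.log (S u / S 0) :=
          funext fun u => hp (S u)
        rw [heq]
        convert h1 using 1
        field_simp
        ring
      have hinner : HasDerivAt (fun u => (1 - σ * β / γ * R u) / c)
          ((-(σ * β / γ * (γ * I t - β * σ * I t * R t))) / c) t :=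
        (((hR' t ht).const_mul (σ * β / γ)).const_sub 1).div_const c
      have hinne : (1 - σ * β / γ * R t) / c ≠ 0 := ne_of_gt (div_pos (h1R t ht) hc)
      have hqR : HasDerivAt (fun u => q (R u)) (-(β * σ * I t * R t)) t := by
        have h1 := ((hinner.log hinne).const_mul (γ / (σ * β))).add ((hR' t ht).sub_const (R 0))
        have heq : (fun u => q (R u)) = fun u =>
            γ / (σ * β) * Real.log ((1 - σ * β / γ * R u) / c) + (R u - R 0) :=
          funext fun u => hq (R u)
        rw [heq]
        refine h1.congr_deriv ?_
        have hnum : (-(σ * β / γ * (γ * I t - β * σ * I t * R t)))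
            = -(σ * β * I t) * (1 - σ * β / γ * R t) := by
          have hγ' : γ ≠ 0 := ne_of_gt hγ
          field_simp
        rw [hnum, mul_div_assoc, mul_div_cancel_right₀ _ hinne]
        field_simp
        ring
      have h2 := (hI' t ht).sub ((hpS.const_add (I 0)).sub (hqR.const_mul α))
      refine h2.congr_deriv ?_
      ring
    intro t ht
    have hconst := sirb_aux_const _ hG t ht
    have hp0 : p (S 0) = 0 := by
      rw [hp (S 0), div_self (ne_of_gt hS0), Real.log_one]; ring
    have hq0 : q (R 0) = 0 := by
      rw [hq (R 0), ← hc_def, div_self (ne_of_gt hc), Real.log_one]; ring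
    rw [hp0, hq0] at hconst
    linarith [hconst]
  -- Step E : S stays above Shat2
  have hSgt : ∀ t : ℝ, 0 ≤ t → Shat2 < S t := by
    intro t ht
    by_contra hle
    push_neg at hle
    have hScont : ContinuousOn S (Icc 0 t) := fun x hx =>
      (hS' x hx.1).continuousAt.continuousWithinAt
    obtain ⟨t₀, ht₀, hSt₀⟩ := intermediate_value_Icc' ht hScont ⟨hle, hS2b.le⟩
    have ht₀0 : 0 ≤ t₀ := ht₀.1
    have hIt₀ := hIeq t₀ ht₀0
    rw [hRr t₀ ht₀0, hSt₀] at hIt₀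
    have := hIpos t₀ ht₀0
    linarith
  -- Stilde positive and key identity
  have hb0 : 0 < β / γ * S 0 / (σ * α * c) := by positivity
  have hSt0pos : 0 < Stilde := by
    rw [hSt]
    exact mul_pos (Real.rpow_pos_of_pos hb0 _) hS0
  have hkey : (Stilde / S 0) ^ (σ - 1) = β / γ * S 0 / (σ * α * c) := by
    rw [hSt, mul_div_cancel_right₀ _ (ne_of_gt hS0), ← Real.rpow_mul hb0.le, one_div,
      inv_mul_cancel₀ (sub_ne_zero.2 (ne_of_gt hσ)), Real.rpow_one]
  -- Rhat derivative
  have hRhatD : ∀ x : ℝ, HasDerivAt Rhat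
      (β / γ + α * (-(c * (1 / S 0 * σ * (x / S 0) ^ (σ - 1))))) x := by
    intro x
    have h1 : HasDerivAt (fun y : ℝ => y / S 0) (1 / S 0) x := by
      simpa using (hasDerivAt_id x).div_const (S 0)
    have h2 : HasDerivAt (fun y : ℝ => (y / S 0) ^ σ)
        (1 / S 0 * σ * (x / S 0) ^ (σ - 1)) x := h1.rpow_const (Or.inr hσ.le)
    have heq : Rhat = fun y => β / γ * y + α * (1 - c * (y / S 0) ^ σ) := by
      funext y; rw [hRhat y, hr y]; field_simp
    rw [heq]
    exact ((hasDerivAt_id x).const_mul (β / γ)).add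
      (((h2.const_mul c).const_sub 1).const_mul α) |>.congr_deriv (by ring)
  -- Rhat strictly decreasing on [Stilde, ∞)
  have hRhatAnti : StrictAntiOn Rhat (Ici Stilde) := by
    apply strictAntiOn_of_deriv_neg (convex_Ici _)
      (fun x _ => (hRhatD x).continuousAt.continuousWithinAt)
    intro x hx
    rw [interior_Ici] at hx
    rw [(hRhatD x).deriv]
    have hxpos : 0 < x := lt_trans hSt0pos hx
    have hlt : (Stilde / S 0) ^ (σ - 1) < (x / S 0) ^ (σ - 1) := by
      exact Real.rpow_lt_rpow (by positivity) ((div_lt_div_iff_of_pos_right hS0).2 hx) (by linarith)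
    rw [hkey] at hlt
    have hfac : 0 < α * c * σ / S 0 := by positivity
    have e1 : α * c * σ / S 0 * (β / γ * S 0 / (σ * α * c)) = β / γ := by
      field_simp
    have e2 := mul_lt_mul_of_pos_left hlt hfac
    rw [e1] at e2
    have e3 : α * (-(c * (1 / S 0 * σ * (x / S 0) ^ (σ - 1))))
        = -(α * c * σ / S 0 * (x / S 0) ^ (σ - 1)) := by ring
    linarith [e2, e3]
  -- R̂(S t) < 1
  have hRhatlt : ∀ t : ℝ, 0 ≤ t → Rhat (S t) < 1 := by
    intro t ht
    have h := hRhatAnti (mem_Ici.2 hS2a.le)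
      (mem_Ici.2 (le_trans hS2a.le (hSgt t ht).le)) (hSgt t ht)
    rwa [hS2root] at h
  -- Step G : I strictly decreasing
  have hIanti : StrictAntiOn I (Ici 0) := by
    apply strictAntiOn_of_deriv_neg (convex_Ici 0)
      (fun x hx => (hI' x hx).continuousAt.continuousWithinAt)
    intro x hx
    rw [interior_Ici] at hx
    rw [(hI' x hx.le).deriv]
    have h1 := hRhatlt x hx.le
    rw [hRhat (S x), div_mul_eq_mul_div, div_lt_one hγ] at h1
    rw [hRr x hx.le]
    have hI := hIpos x hx.le
    nlinarith [mul_pos hI (sub_pos.2 h1)]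
  refine ⟨hIanti, ?_⟩
  -- Step H : convergence to 0
  set J : ℝ → ℝ := fun t => I (max t 0) with hJ
  have hJanti : Antitone J := fun s t hst =>
    hIanti.antitoneOn (mem_Ici.2 (le_max_right s 0)) (mem_Ici.2 (le_max_right t 0))
      (max_le_max hst le_rfl)
  have hbdd : BddBelow (Set.range J) := by
    refine ⟨0, ?_⟩
    rintro y ⟨t, rfl⟩
    exact (hIpos _ (le_max_right t 0)).le
  have htend := tendsto_atTop_ciInf hJanti hbdd
  have hL0 : 0 ≤ ⨅ t, J t := le_ciInf fun t => (hIpos _ (le_max_right t 0)).le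
  have hLzero : (⨅ t, J t) = 0 := by
    by_contra hne
    obtain ⟨L, hLdef⟩ : ∃ L : ℝ, L = ⨅ t, J t := ⟨_, rfl⟩
    have hL : 0 < L := by
      rw [hLdef]; exact lt_of_le_of_ne hL0 (Ne.symm hne)
    have hLle : ∀ t : ℝ, 0 ≤ t → L ≤ I t := by
      intro t ht
      have h : (⨅ t, J t) ≤ J t := ciInf_le hbdd t
      rw [← hLdef] at h
      simpa [hJ, max_eq_left ht] using h
    have hS2pos : 0 < Shat2 := lt_trans hSt0pos hS2a
    obtain ⟨k, hkdef⟩ : ∃ k : ℝ, k = β * Shat2 * L := ⟨_, rfl⟩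
    have hk : 0 < k := by rw [hkdef]; exact mul_pos (mul_pos hβ hS2pos) hL
    have hganti : AntitoneOn (fun t => S t + k * t) (Ici 0) := by
      apply antitoneOn_of_deriv_nonpos (convex_Ici 0)
      · exact fun x hx => ((hS' x hx).continuousAt.add
          (continuous_const.mul continuous_id).continuousAt).continuousWithinAt
      · intro x hx
        rw [interior_Ici] at hx
        have hd : HasDerivAt (fun t => S t + k * t) (-(β * S x * I x) + k * 1) x :=
          (hS' x hx.le).add (by simpa using (hasDerivAt_id x).const_mul k)
        exact hd.differentiableAt.differentiableWithinAt
      · intro x hx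
        rw [interior_Ici] at hx
        have hd : HasDerivAt (fun t => S t + k * t) (-(β * S x * I x) + k * 1) x :=
          (hS' x hx.le).add (by simpa using (hasDerivAt_id x).const_mul k)
        rw [hd.deriv]
        have h1 : Shat2 * L ≤ S x * I x :=
          mul_le_mul (hSgt x hx.le).le (hLle x hx.le) hL.le
            (le_trans hS2pos.le (hSgt x hx.le).le)
        rw [hkdef]
        nlinarith [h1, hβ]
    obtain ⟨t₀, ht₀def⟩ : ∃ t₀ : ℝ, t₀ = (S 0 - Shat2) / k + 1 := ⟨_, rfl⟩
    have ht₀pos : 0 ≤ t₀ := by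
      have : 0 < (S 0 - Shat2) / k := div_pos (by linarith) hk
      linarith
    have hg : S t₀ + k * t₀ ≤ S 0 + k * 0 := hganti (mem_Ici.2 le_rfl) (mem_Ici.2 ht₀pos) ht₀pos
    have hkt : k * t₀ = (S 0 - Shat2) + k := by
      rw [ht₀def]; field_simp
    have hcontr := hSgt t₀ ht₀pos
    linarith [hg, hkt, hk, hcontr]
  rw [hLzero] at htend
  apply htend.congr'
  filter_upwards [Filter.eventually_ge_atTop (0:ℝ)] with t ht
  rw [hJ]
  simp [max_eq_left ht]
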